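/- On H = L₂(ℝ) with the multiplication group U^t f(x) = e^{itx} f(x), for the subspace X of functions f(x) = |x|^{α/2} Σ c_i χ_{(a_i,b_i)}(x) (disjoint intervals with 0 < a_1) with norm ‖f‖_X = ‖f(x)|x|^{−α/2}‖₂, one has ‖P_{t,s}‖²_{X→H} ≤ (2^α/ρ(α)) (t−s)^{−α} for all t > s, where ρ(α) = inf_{y>0} y^{2−α}/sin²y. -/

import Mathlib

open MeasureTheory Real Set

/-- `ρ(α) = inf_{y>0} y^{2-α}/sin²y` (points with `sin y = 0` excluded). -/
noncomputable def rho (α : ℝ) : ℝ :=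
  sInf {r : ℝ | ∃ y > 0, Real.sin y ≠ 0 ∧ r = y ^ (2 - α) / Real.sin y ^ 2}

lemma rho_lb (α : ℝ) (hα0 : 0 ≤ α) (hα2 : α ≤ 2) :
    ∀ r ∈ {r : ℝ | ∃ y > 0, Real.sin y ≠ 0 ∧ r = y ^ (2 - α) / Real.sin y ^ 2}, 1 ≤ r := by
  rintro r ⟨y, hy, hs, rfl⟩
  have hs2 : 0 < Real.sin y ^ 2 := by positivity
  rw [le_div_iff₀ hs2, one_mul]
  rcases le_or_gt y 1 with h1 | h1
  · calc Real.sin y ^ 2 ≤ y ^ 2 := Real.sin_sq_le_sq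
      _ = y ^ (2:ℝ) := (Real.rpow_two y).symm
      _ ≤ y ^ (2 - α) := Real.rpow_le_rpow_of_exponent_ge hy h1 (by linarith)
  · calc Real.sin y ^ 2 ≤ 1 := Real.sin_sq_le_one y
      _ = (1:ℝ) ^ (2 - α) := (Real.one_rpow _).symm
      _ ≤ y ^ (2 - α) := Real.rpow_le_rpow zero_le_one h1.le (by linarith)

lemma one_le_rho (α : ℝ) (hα0 : 0 ≤ α) (hα2 : α ≤ 2) : 1 ≤ rho α := by
  apply le_csInf
  · exact ⟨(π/2) ^ (2 - α) / Real.sin (π/2) ^ 2, π/2, by positivity, by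
      rw [Real.sin_pi_div_two]; norm_num, rfl⟩
  · exact rho_lb α hα0 hα2

lemma rho_mul_sin_sq_le (α : ℝ) (hα0 : 0 ≤ α) (hα2 : α ≤ 2) {y : ℝ} (hy : 0 < y) :
    rho α * Real.sin y ^ 2 ≤ y ^ (2 - α) := by
  rcases eq_or_ne (Real.sin y) 0 with hs | hs
  · rw [hs]
    have : (0:ℝ) < y ^ (2 - α) := Real.rpow_pos_of_pos hy _
    simpa using this.le
  · have hs2 : 0 < Real.sin y ^ 2 := by positivity
    have hle : rho α ≤ y ^ (2 - α) / Real.sin y ^ 2 :=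
      csInf_le ⟨1, rho_lb α hα0 hα2⟩ ⟨y, hy, hs, rfl⟩
    rw [le_div_iff₀ hs2] at hle
    exact hle

/-- Pointwise multiplier bound. -/
lemma key_bound (α : ℝ) (hα0 : 0 ≤ α) (hα2 : α ≤ 2) (s t : ℝ) (hts : s < t)
    {x : ℝ} (hx : 0 < x) :
    ‖(Complex.exp (Complex.I * t * x) - Complex.exp (Complex.I * s * x)) /
        (Complex.I * x * (t - s))‖ ^ 2 * |x| ^ α ≤ 2 ^ α / rho α * (t - s) ^ (-α) := by
  set τ := t - s with hτdef
  have hτ : 0 < τ := sub_pos.2 hts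
  have hρ : 0 < rho α := lt_of_lt_of_le one_pos (one_le_rho α hα0 hα2)
  -- norm of numerator
  have hnum : ‖Complex.exp (Complex.I * t * x) - Complex.exp (Complex.I * s * x)‖ ^ 2
      = 4 * Real.sin (τ * x / 2) ^ 2 := by
    have e1 : Complex.I * (t:ℂ) * (x:ℂ) = ((t*x : ℝ) : ℂ) * Complex.I := by push_cast; ring
    have e2 : Complex.I * (s:ℂ) * (x:ℂ) = ((s*x : ℝ) : ℂ) * Complex.I := by push_cast; ring
    rw [e1, e2, Complex.exp_mul_I, Complex.exp_mul_I]
    have : (Complex.cos ((t*x : ℝ) : ℂ) + Complex.sin ((t*x : ℝ) : ℂ) * Complex.I) -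
        (Complex.cos ((s*x : ℝ) : ℂ) + Complex.sin ((s*x : ℝ) : ℂ) * Complex.I)
        = ((Real.cos (t*x) - Real.cos (s*x) : ℝ) : ℂ)
          + ((Real.sin (t*x) - Real.sin (s*x) : ℝ) : ℂ) * Complex.I := by
      push_cast; ring
    rw [this, Complex.sq_norm, Complex.normSq_add_mul_I]
    have hc : Real.cos (τ * x) = Real.cos (t*x) * Real.cos (s*x)
        + Real.sin (t*x) * Real.sin (s*x) := by
      rw [hτdef, sub_mul, Real.cos_sub]
    have hd : Real.cos (2 * (τ * x / 2)) = 2 * Real.cos (τ * x / 2) ^ 2 - 1 :=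
      Real.cos_two_mul _
    have h2 : (2:ℝ) * (τ * x / 2) = τ * x := by ring
    rw [h2] at hd
    have hpyt : Real.sin (τ*x/2) ^ 2 + Real.cos (τ*x/2) ^ 2 = 1 := Real.sin_sq_add_cos_sq _
    have hpyt1 : Real.sin (t*x) ^ 2 + Real.cos (t*x) ^ 2 = 1 := Real.sin_sq_add_cos_sq _
    have hpyt2 : Real.sin (s*x) ^ 2 + Real.cos (s*x) ^ 2 = 1 := Real.sin_sq_add_cos_sq _
    nlinarith [hc, hd, hpyt, hpyt1, hpyt2]
  have hden : ‖Complex.I * (x:ℂ) * ((t:ℂ) - s)‖ = x * τ := by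
    rw [norm_mul, norm_mul, Complex.norm_I, one_mul, Complex.norm_real]
    have : ((t:ℂ) - s) = ((τ : ℝ) : ℂ) := by rw [hτdef]; push_cast; ring
    rw [this, Complex.norm_real, Real.norm_eq_abs, Real.norm_eq_abs,
      abs_of_pos hx, abs_of_pos hτ]
  have habs : |x| = x := abs_of_pos hx
  rw [norm_div, div_pow, hden, hnum, habs]
  -- now a real inequality
  have hy : 0 < τ * x / 2 := by positivity
  have hkey := rho_mul_sin_sq_le α hα0 hα2 hy
  -- (τ*x/2)^(2-α) = τ^(2-α) * x^(2-α) / 2^(2-α)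
  have hsplit : (τ * x / 2 : ℝ) ^ (2 - α)
      = τ ^ (2-α) * x ^ (2-α) / 2 ^ (2-α) := by
    rw [Real.div_rpow (by positivity) (by norm_num), Real.mul_rpow hτ.le hx.le]
  have hτs : τ ^ (2-α) = τ ^ 2 * τ ^ (-α) := by
    rw [show (2 - α : ℝ) = (2:ℝ) + (-α) by ring, Real.rpow_add hτ, Real.rpow_two]
  have hxs : x ^ (2-α) * x ^ α = x ^ 2 := by
    rw [← Real.rpow_add hx, ← Real.rpow_two]; norm_num
  have h2s : (2:ℝ) ^ (2-α) * 2 ^ α = 4 := by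
    rw [← Real.rpow_add (by norm_num : (0:ℝ) < 2)]; norm_num
  have h2pos : (0:ℝ) < (2:ℝ) ^ (2-α) := by positivity
  have hτα : (0:ℝ) < τ ^ (-α) := Real.rpow_pos_of_pos hτ _
  have h2α : (0:ℝ) < (2:ℝ) ^ α := Real.rpow_pos_of_pos (by norm_num) _
  have hxα : (0:ℝ) < x ^ α := Real.rpow_pos_of_pos hx _
  have hx2α : (0:ℝ) < x ^ (2-α) := Real.rpow_pos_of_pos hx _
  have h2s' : (2:ℝ) ^ α = 4 / 2 ^ (2 - α) := by
    rw [eq_div_iff h2pos.ne']; linarith [h2s]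
  have hxs' : x ^ ((2:ℝ)-α) = x ^ 2 / x ^ α := by
    rw [eq_div_iff hxα.ne']; linarith [hxs]
  rw [div_mul_eq_mul_div, div_le_iff₀ (by positivity)]
  calc 4 * Real.sin (τ*x/2) ^ 2 * x ^ α
      = 4 * x ^ α / rho α * (rho α * Real.sin (τ*x/2) ^ 2) := by
        field_simp
    _ ≤ 4 * x ^ α / rho α * ((τ * x / 2) ^ (2 - α)) := by
        apply mul_le_mul_of_nonneg_left hkey (by positivity)
    _ = 2 ^ α / rho α * τ ^ (-α) * (x * τ) ^ 2 := by
        rw [hsplit, hτs, hxs', h2s']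
        field_simp

/-- On `H = L₂(ℝ)` with the multiplication group `U^t f(x) = e^{itx} f(x)` (for which
`P = 0`), the ergodic average is `P_{t,s}f(x) = ((e^{itx} - e^{isx})/(ix(t-s))) f(x)`.
For `f(x) = |x|^{α/2} Σ cᵢ χ_{(aᵢ,bᵢ)}(x)` with `0 < aᵢ < bᵢ ≤ a_{i+1}` one has
`‖f‖²_X = Σ |cᵢ|² (bᵢ - aᵢ)` and `‖P_{t,s} f‖² ≤ (2^α/ρ(α)) (t-s)^{-α} ‖f‖²_X`,
i.e. `‖P_{t,s}‖²_{X→H} ≤ (2^α/ρ(α)) (t-s)^{-α}`. -/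
theorem stmt13 (α : ℝ) (hα : α ∈ Set.Icc (0 : ℝ) 2)
    (n : ℕ) (c : Fin n → ℂ) (a b : Fin n → ℝ)
    (hab : ∀ i, 0 < a i ∧ a i < b i)
    (hord : ∀ i j : Fin n, i < j → b i ≤ a j)
    (s t : ℝ) (hts : s < t) :
    ∫ x : ℝ,
        ‖(Complex.exp (Complex.I * t * x) - Complex.exp (Complex.I * s * x)) /
            (Complex.I * x * (t - s)) *
          (((|x| ^ (α / 2) : ℝ) : ℂ) *
            ∑ i, c i * Set.indicator (Set.Ioo (a i) (b i)) (fun _ => (1 : ℂ)) x)‖ ^ 2 ≤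
      2 ^ α / rho α * (t - s) ^ (-α) * ∑ i, ‖c i‖ ^ 2 * (b i - a i) := by
  obtain ⟨hα0, hα2⟩ := hα
  have hρ : 0 < rho α := lt_of_lt_of_le one_pos (one_le_rho α hα0 hα2)
  have hτ : 0 < t - s := sub_pos.2 hts
  set K : ℝ := 2 ^ α / rho α * (t - s) ^ (-α) with hK
  have hKpos : 0 < K := by
    apply mul_pos (div_pos (Real.rpow_pos_of_pos (by norm_num) _) hρ)
      (Real.rpow_pos_of_pos hτ _)
  set g : ℝ → ℝ := fun x =>
    K * ∑ i, ‖c i‖ ^ 2 * Set.indicator (Set.Ioo (a i) (b i)) (fun _ => (1 : ℝ)) x with hg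
  have hgint : Integrable g := by
    apply Integrable.const_mul
    apply integrable_finset_sum
    intro i _
    apply Integrable.const_mul
    rw [integrable_indicator_iff measurableSet_Ioo]
    exact (integrableOn_const (by rw [Real.volume_Ioo]; exact ENNReal.ofReal_ne_top))
  -- pointwise bound
  have hpt : ∀ x : ℝ,
      ‖(Complex.exp (Complex.I * t * x) - Complex.exp (Complex.I * s * x)) /
            (Complex.I * x * (t - s)) *
          (((|x| ^ (α / 2) : ℝ) : ℂ) *
            ∑ i, c i * Set.indicator (Set.Ioo (a i) (b i)) (fun _ => (1 : ℂ)) x)‖ ^ 2 ≤ g x := by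
    intro x
    by_cases hmem : ∃ k, x ∈ Set.Ioo (a k) (b k)
    · obtain ⟨k, hk⟩ := hmem
      have hxpos : 0 < x := lt_trans (hab k).1 hk.1
      have huniq : ∀ j : Fin n, j ≠ k → x ∉ Set.Ioo (a j) (b j) := by
        intro j hj hmem'
        rcases lt_or_gt_of_ne hj with h | h
        · exact absurd hmem'.2 (not_lt.2 (le_trans (hord j k h) hk.1.le))
        · exact absurd hk.2 (not_lt.2 (le_trans (hord k j h) hmem'.1.le))
      have hsum : (∑ i, c i * Set.indicator (Set.Ioo (a i) (b i)) (fun _ => (1 : ℂ)) x) = c k := by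
        rw [Finset.sum_eq_single k]
        · rw [Set.indicator_of_mem hk, mul_one]
        · intro j _ hj
          rw [Set.indicator_of_notMem (huniq j hj), mul_zero]
        · intro h; exact absurd (Finset.mem_univ k) h
      have hsum2 : (∑ i, ‖c i‖ ^ 2 * Set.indicator (Set.Ioo (a i) (b i)) (fun _ => (1 : ℝ)) x)
          = ‖c k‖ ^ 2 := by
        rw [Finset.sum_eq_single k]
        · rw [Set.indicator_of_mem hk, mul_one]
        · intro j _ hj
          rw [Set.indicator_of_notMem (huniq j hj), mul_zero]
        · intro h; exact absurd (Finset.mem_univ k) h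
      rw [hsum, hg]
      simp only
      rw [hsum2]
      rw [norm_mul, norm_mul, mul_pow, mul_pow, Complex.norm_real, Real.norm_eq_abs,
        abs_of_nonneg (by positivity : (0:ℝ) ≤ |x| ^ (α/2))]
      have hw : (|x| ^ (α/2)) ^ 2 = |x| ^ α := by
        rw [← Real.rpow_natCast (|x| ^ (α/2)) 2, ← Real.rpow_mul (abs_nonneg x)]
        norm_num
      rw [hw]
      have := key_bound α hα0 hα2 s t hts hxpos
      calc ‖(Complex.exp (Complex.I * t * x) - Complex.exp (Complex.I * s * x)) /
            (Complex.I * x * (t - s))‖ ^ 2 * (|x| ^ α * ‖c k‖ ^ 2)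
          = (‖(Complex.exp (Complex.I * t * x) - Complex.exp (Complex.I * s * x)) /
            (Complex.I * x * (t - s))‖ ^ 2 * |x| ^ α) * ‖c k‖ ^ 2 := by ring
        _ ≤ K * ‖c k‖ ^ 2 := by
            apply mul_le_mul_of_nonneg_right this (by positivity)
    · push_neg at hmem
      have hsum : (∑ i, c i * Set.indicator (Set.Ioo (a i) (b i)) (fun _ => (1 : ℂ)) x) = 0 := by
        apply Finset.sum_eq_zero
        intro j _
        rw [Set.indicator_of_notMem (hmem j), mul_zero]
      have hsum2 : (∑ i, ‖c i‖ ^ 2 * Set.indicator (Set.Ioo (a i) (b i)) (fun _ => (1 : ℝ)) x)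
          = 0 := by
        apply Finset.sum_eq_zero
        intro j _
        rw [Set.indicator_of_notMem (hmem j), mul_zero]
      rw [hsum, hg]
      simp only
      rw [hsum2, mul_zero, mul_zero, mul_zero, norm_zero]
      norm_num
  -- integral of g
  have hgval : ∫ x, g x = K * ∑ i, ‖c i‖ ^ 2 * (b i - a i) := by
    rw [hg]
    simp only
    rw [integral_const_mul]
    congr 1
    rw [integral_finset_sum]
    · apply Finset.sum_congr rfl
      intro i _
      rw [integral_const_mul, integral_indicator_const (1:ℝ) measurableSet_Ioo]
      rw [Real.volume_real_Ioo_of_le (by linarith [(hab i).2])]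
      simp
    · intro i _
      apply Integrable.const_mul
      rw [integrable_indicator_iff measurableSet_Ioo]
      exact (integrableOn_const (by rw [Real.volume_Ioo]; exact ENNReal.ofReal_ne_top))
  calc (∫ x : ℝ, ‖(Complex.exp (Complex.I * t * x) - Complex.exp (Complex.I * s * x)) /
            (Complex.I * x * (t - s)) *
          (((|x| ^ (α / 2) : ℝ) : ℂ) *
            ∑ i, c i * Set.indicator (Set.Ioo (a i) (b i)) (fun _ => (1 : ℂ)) x)‖ ^ 2)
      ≤ ∫ x, g x := by
        apply integral_mono_of_nonneg
        · filter_upwards with x; positivity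
        · exact hgint
        · filter_upwards with x; exact hpt x
    _ = K * ∑ i, ‖c i‖ ^ 2 * (b i - a i) := hgval
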